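/- Let p be a prime, m = p, and j_1, ..., j_m ≥ 1 integers with v_p(j_1! ⋯ j_m!) = v_p(⌊(j_1+...+j_m)/p⌋) (finite). Then either j_i ≤ p-1 for all i, or there exists an index k such that j_k = 2p-1 and j_i = p-1 for all i ≠ k. -/

import Mathlib

open Finset

private lemma aux_pow_stmt6 (p : ℕ) (hp : 2 ≤ p) : ∀ R, 2 ≤ R → R + p ≤ p ^ R := by
  intro R
  induction R with
  | zero => omega
  | succ n ih =>
    intro _
    rcases Nat.lt_or_ge n 2 with h | h
    · interval_cases n
      · omega
      · have h2 : p ^ (1 + 1) = p * p := by ring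
        nlinarith
    · have h1 := ih h
      have h2 : p ^ (n + 1) = p * p ^ n := by ring
      have h3 : 1 ≤ p ^ n := Nat.one_le_pow _ _ (by omega)
      nlinarith

theorem stmt_6 (p : ℕ) (hp : p.Prime)
    (j : Fin p → ℕ) (hj : ∀ i, 1 ≤ j i)
    (heq : padicValNat p (∏ i, Nat.factorial (j i)) = padicValNat p ((∑ i, j i) / p)) :
    (∀ i, j i ≤ p - 1) ∨
      ∃ k : Fin p, j k = 2 * p - 1 ∧ ∀ i ≠ k, j i = p - 1 := by
  haveI : Fact p.Prime := ⟨hp⟩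
  have hp2 : 2 ≤ p := hp.two_le
  by_cases hall : ∀ i, j i ≤ p - 1
  · exact Or.inl hall
  right
  push_neg at hall
  obtain ⟨k, hk⟩ := hall
  have hkp : p ≤ j k := by omega
  set S : ℕ := ∑ i, j i with hSdef
  -- valuation of the product is the sum of valuations
  have hprod : padicValNat p (∏ i, Nat.factorial (j i)) = ∑ i, padicValNat p (j i).factorial := by
    rw [← Nat.factorization_def _ hp,
      Nat.factorization_prod (fun i _ => Nat.factorial_ne_zero _)]
    simp only [Finset.sum_apply']
    exact Finset.sum_congr rfl fun i _ => Nat.factorization_def _ hp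
  rw [hprod] at heq
  -- v_p(n!) ≥ n / p
  have hvge : ∀ n : ℕ, n / p ≤ padicValNat p n.factorial := by
    intro n
    have h1 := padicValNat_mul_div_factorial (p := p) n
    have h2 := padicValNat_factorial_mul (p := p) (n / p)
    omega
  -- S ≥ p
  have hSp : p ≤ S := by
    calc p = ∑ _i : Fin p, 1 := by simp
    _ ≤ S := Finset.sum_le_sum fun i _ => hj i
  have hT1 : 1 ≤ S / p := (Nat.one_le_div_iff hp.pos).mpr hSp
  have hvk : 1 ≤ padicValNat p (j k).factorial := by
    have h1 := hvge (j k)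
    have h2 : 1 ≤ j k / p := (Nat.one_le_div_iff hp.pos).mpr hkp
    omega
  have hL1 : 1 ≤ ∑ i, padicValNat p (j i).factorial :=
    le_trans hvk (Finset.single_le_sum (f := fun i => padicValNat p (j i).factorial) (fun i _ => Nat.zero_le _) (mem_univ k))
  set R : ℕ := padicValNat p (S / p) with hRdef
  have hR1 : 1 ≤ R := by omega
  have hpow : p ^ R ≤ S / p := Nat.le_of_dvd (by omega) pow_padicValNat_dvd
  -- S / p ≤ ∑ (j i / p) + (p - 1)
  have hTle : S / p ≤ (∑ i, j i / p) + (p - 1) := by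
    have h1 : S ≤ p * ((∑ i, j i / p) + (p - 1)) := by
      have hb : ∀ i : Fin p, j i ≤ p * (j i / p) + (p - 1) := fun i => by
        have h3 := Nat.div_add_mod (j i) p
        have h4 := Nat.mod_lt (j i) hp.pos
        omega
      calc S ≤ ∑ i, (p * (j i / p) + (p - 1)) := Finset.sum_le_sum fun i _ => hb i
      _ = (∑ i, p * (j i / p)) + (∑ _i : Fin p, (p - 1)) := Finset.sum_add_distrib
      _ = p * (∑ i, j i / p) + p * (p - 1) := by
          rw [← Finset.mul_sum]; simp [Finset.card_univ, Nat.mul_comm]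
      _ = p * ((∑ i, j i / p) + (p - 1)) := by ring
    calc S / p ≤ (p * ((∑ i, j i / p) + (p - 1))) / p := Nat.div_le_div_right h1
    _ = _ := Nat.mul_div_cancel_left _ hp.pos
  have hQL : (∑ i, j i / p) ≤ ∑ i, padicValNat p (j i).factorial :=
    Finset.sum_le_sum fun i _ => hvge (j i)
  have hc : p ^ R ≤ R + (p - 1) := by
    calc p ^ R ≤ S / p := hpow
    _ ≤ (∑ i, j i / p) + (p - 1) := hTle
    _ ≤ (∑ i, padicValNat p (j i).factorial) + (p - 1) := Nat.add_le_add_right hQL _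
    _ = R + (p - 1) := by rw [heq]
  have hReq : R = 1 := by
    by_contra h
    have h1 : R + p ≤ p ^ R := aux_pow_stmt6 p hp2 R (by omega)
    have := h1.trans hc
    omega
  -- S / p = p
  have hTp : S / p = p := by
    have h1 : p ≤ S / p := by
      have := hpow; rw [hReq, pow_one] at this; exact this
    have h2 : S / p ≤ p := by omega
    omega
  have hSS : p * p ≤ S := (Nat.le_div_iff_mul_le hp.pos).mp (by omega)
  -- the valuation sum equals 1
  have hsum1 : ∑ i, padicValNat p (j i).factorial = 1 := by omega
  have herase : padicValNat p (j k).factorial + ∑ i ∈ univ.erase k, padicValNat p (j i).factorial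
      = ∑ i, padicValNat p (j i).factorial :=
    Finset.add_sum_erase univ (fun i => padicValNat p (j i).factorial) (mem_univ k)
  have hrest : ∑ i ∈ univ.erase k, padicValNat p (j i).factorial = 0 := by omega
  have hvk1 : padicValNat p (j k).factorial = 1 := by omega
  have hvzero : ∀ i, i ≠ k → padicValNat p (j i).factorial = 0 := fun i hik =>
    (Finset.sum_eq_zero_iff.mp hrest) i (Finset.mem_erase.mpr ⟨hik, mem_univ i⟩)
  -- j i ≤ p - 1 for i ≠ k
  have hle : ∀ i, i ≠ k → j i ≤ p - 1 := by
    intro i hik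
    by_contra h
    have h1 : 1 ≤ j i / p := (Nat.one_le_div_iff hp.pos).mpr (by omega)
    have h2 := hvge (j i)
    have h3 := hvzero i hik
    omega
  -- j k ≤ 2p - 1
  have hjkle : j k ≤ 2 * p - 1 := by
    by_contra h
    have h1 : 2 ≤ j k / p := (Nat.le_div_iff_mul_le hp.pos).mpr (by omega)
    have h2 := hvge (j k)
    omega
  -- final counting
  obtain ⟨q, rfl⟩ : ∃ q, p = q + 2 := ⟨p - 2, by omega⟩
  set A : ℕ := ∑ i ∈ univ.erase k, j i with hAdef
  have hSA : j k + A = S := Finset.add_sum_erase univ j (mem_univ k)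
  have hcard : (univ.erase k).card = q + 1 := by
    rw [Finset.card_erase_of_mem (mem_univ k), Finset.card_univ]; simp
  have hAle : A ≤ (q + 1) * (q + 1) := by
    calc A ≤ ∑ _i ∈ univ.erase k, (q + 1) :=
          Finset.sum_le_sum fun i hi => by
            have := hle i (Finset.mem_erase.mp hi).1; omega
    _ = (q + 1) * (q + 1) := by rw [Finset.sum_const, hcard]; simp [Nat.mul_comm]
  have key : (q + 1) * (q + 1) + (2 * q + 3) = (q + 2) * (q + 2) := by ring
  have hjk2 : j k ≤ 2 * q + 3 := by omega
  have hjkeq : j k = 2 * q + 3 := by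
    have : (q + 2) * (q + 2) ≤ j k + A := by omega
    omega
  have hAeq : A = (q + 1) * (q + 1) := by
    have : (q + 2) * (q + 2) ≤ j k + A := by omega
    omega
  refine ⟨k, by omega, ?_⟩
  intro i hik
  have hi' : i ∈ univ.erase k := Finset.mem_erase.mpr ⟨hik, mem_univ i⟩
  have herase2 := Finset.add_sum_erase (univ.erase k) j hi'
  have hcard2 : ((univ.erase k).erase i).card = q := by
    rw [Finset.card_erase_of_mem hi', hcard]; omega
  have hrestle : ∑ x ∈ (univ.erase k).erase i, j x ≤ q * (q + 1) := by
    calc ∑ x ∈ (univ.erase k).erase i, j x ≤ ∑ _x ∈ (univ.erase k).erase i, (q + 1) :=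
          Finset.sum_le_sum fun x hx => by
            have := hle x (Finset.mem_erase.mp (Finset.mem_erase.mp hx).2).1; omega
    _ = q * (q + 1) := by rw [Finset.sum_const, hcard2]; simp [Nat.mul_comm]
  have key2 : q * (q + 1) + (q + 1) = (q + 1) * (q + 1) := by ring
  have hige : q + 1 ≤ j i := by omega
  have := hle i hik
  omega
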